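/- arXiv:1409.0331 — 2 statements merged into one kernel-verified Lean document; each statement's English description precedes it below -/
import Mathlib

section
/- For Re(s) > 0, Re(ν) > -1, and a > 0, ∫_0^∞ e^{-sx} x^{ν/2} J_ν(2√(ax)) dx = e^{-a/s} a^{ν/2} s^{-ν-1}, where J_ν is the Bessel function of the first kind. -/
open Complex MeasureTheory

namespace LaplaceBesselAux

open Set Filter Metric Real

set_option maxHeartbeats 1000000

lemma integrableOn_rpow_mul_exp_neg {c r : ℝ} (hc : -1 < c) (hr : 0 < r) :
    IntegrableOn (fun t : ℝ => t ^ c * Real.exp (-(r * t))) (Ioi 0) := by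
  have h := Real.GammaIntegral_convergent (s := c + 1) (by linarith)
  have h2 : IntegrableOn (fun t : ℝ => Real.exp (-(r * t)) * (r * t) ^ (c + 1 - 1)) (Ioi 0) := by
    have := (integrableOn_Ioi_comp_mul_left_iff
      (fun x : ℝ => Real.exp (-x) * x ^ (c + 1 - 1)) 0 hr).mpr (by simpa using h)
    simpa [mul_zero] using this
  apply IntegrableOn.congr_fun (h2.const_mul ((r : ℝ) ^ c)⁻¹) ?_ measurableSet_Ioi
  intro t ht
  rw [mem_Ioi] at ht
  have hrc : (r : ℝ) ^ c ≠ 0 := (Real.rpow_pos_of_pos hr c).ne'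
  simp only [add_sub_cancel_right]
  rw [Real.mul_rpow hr.le ht.le]
  field_simp

lemma aesm_cpow_exp (w z : ℂ) :
    AEStronglyMeasurable (fun t : ℝ => (t : ℂ) ^ (w - 1) * Complex.exp (-z * t))
      (volume.restrict (Ioi 0)) := by
  apply ContinuousOn.aestronglyMeasurable ?_ measurableSet_Ioi
  apply ContinuousOn.mul
  · intro t ht
    rw [mem_Ioi] at ht
    exact ((continuousAt_cpow_const (by exact Or.inl (by exact_mod_cast ht))).comp
      Complex.continuous_ofReal.continuousAt).continuousWithinAt
  · exact (Complex.continuous_exp.comp ((continuous_const.mul Complex.continuous_ofReal))).continuousOn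

lemma norm_cpow_exp {w z : ℂ} {t : ℝ} (ht : 0 < t) :
    ‖(t : ℂ) ^ (w - 1) * Complex.exp (-z * t)‖ = t ^ (w.re - 1) * Real.exp (-(z.re * t)) := by
  rw [norm_mul, Complex.norm_cpow_eq_rpow_re_of_pos ht, Complex.sub_re,
    Complex.one_re, Complex.norm_exp]
  congr 2
  simp [Complex.mul_re]

lemma integrableOn_cpow_mul_exp_neg {w : ℂ} {r : ℝ} (hw : 0 < w.re) (hr : 0 < r) (z : ℂ)
    (hz : r ≤ z.re) :
    IntegrableOn (fun t : ℝ => (t : ℂ) ^ (w - 1) * Complex.exp (-z * t)) (Ioi 0) := by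
  apply Integrable.mono' (integrableOn_rpow_mul_exp_neg (c := w.re - 1) (by linarith) hr)
    (aesm_cpow_exp w z)
  filter_upwards [ae_restrict_mem measurableSet_Ioi] with t ht
  rw [mem_Ioi] at ht
  rw [norm_cpow_exp ht]
  apply mul_le_mul_of_nonneg_left _ (by positivity)
  exact Real.exp_le_exp.mpr (by nlinarith)

lemma laplace_cpow {w z : ℂ} (hw : 0 < w.re) (hz : 0 < z.re) :
    ∫ t in Ioi (0:ℝ), (t : ℂ) ^ (w - 1) * Complex.exp (-z * t)
      = Complex.Gamma w * z ^ (-w) := by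
  set U : Set ℂ := {z | 0 < z.re} with hU
  have hUopen : IsOpen U := isOpen_lt continuous_const Complex.continuous_re
  have hUconn : IsPreconnected U := (convex_halfSpace_re_gt 0).isPreconnected
  set g : ℂ → ℂ := fun z => ∫ t in Ioi (0:ℝ), (t : ℂ) ^ (w - 1) * Complex.exp (-z * t) with hg
  set h : ℂ → ℂ := fun z => Complex.Gamma w * z ^ (-w) with hh
  have hgd : DifferentiableOn ℂ g U := by
    intro z₀ hz₀
    rw [hU, mem_setOf_eq] at hz₀
    set ε := z₀.re / 2 with hε
    have hε0 : 0 < ε := by positivity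
    have hmeas : ∀ᶠ z in nhds z₀, AEStronglyMeasurable
        (fun t : ℝ => (t : ℂ) ^ (w - 1) * Complex.exp (-z * t)) (volume.restrict (Ioi 0)) :=
      Eventually.of_forall fun z => aesm_cpow_exp w z
    have hint : IntegrableOn (fun t : ℝ => (t : ℂ) ^ (w - 1) * Complex.exp (-z₀ * t)) (Ioi 0) :=
      integrableOn_cpow_mul_exp_neg hw hz₀ z₀ le_rfl
    have hmeas' : AEStronglyMeasurable
        (fun t : ℝ => (t : ℂ) ^ (w - 1) * (-(t:ℂ) * Complex.exp (-z₀ * t)))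
        (volume.restrict (Ioi 0)) := by
      apply ContinuousOn.aestronglyMeasurable ?_ measurableSet_Ioi
      apply ContinuousOn.mul
      · intro t ht
        rw [mem_Ioi] at ht
        exact ((continuousAt_cpow_const (Or.inl (by exact_mod_cast ht))).comp
          Complex.continuous_ofReal.continuousAt).continuousWithinAt
      · exact ((Complex.continuous_ofReal.neg).mul
          (Complex.continuous_exp.comp (continuous_const.mul Complex.continuous_ofReal))).continuousOn
    have hbound : ∀ᵐ t : ℝ ∂(volume.restrict (Ioi (0:ℝ))), ∀ z ∈ ball z₀ ε,
        ‖(t : ℂ) ^ (w - 1) * (-(t:ℂ) * Complex.exp (-z * t))‖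
          ≤ t ^ w.re * Real.exp (-(ε * t)) := by
      filter_upwards [ae_restrict_mem measurableSet_Ioi] with t ht
      intro z hzball
      rw [mem_Ioi] at ht
      have hzre : ε ≤ z.re := by
        have h1 : |(z - z₀).re| ≤ ‖z - z₀‖ := Complex.abs_re_le_norm _
        rw [mem_ball, Complex.dist_eq] at hzball
        have := abs_le.mp (h1.trans hzball.le)
        simp only [Complex.sub_re] at this
        linarith [this.1]
      have : ‖(t : ℂ) ^ (w - 1) * (-(t:ℂ) * Complex.exp (-z * t))‖
          = t * (t ^ (w.re - 1) * Real.exp (-(z.re * t))) := by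
        rw [show (t : ℂ) ^ (w - 1) * (-(t:ℂ) * Complex.exp (-z * t))
            = -(t:ℂ) * ((t : ℂ) ^ (w - 1) * Complex.exp (-z * t)) by ring,
          norm_mul, norm_cpow_exp ht, norm_neg, Complex.norm_real, Real.norm_of_nonneg ht.le]
      rw [this]
      have h4 : Real.exp (-(z.re*t)) ≤ Real.exp (-(ε*t)) := Real.exp_le_exp.mpr (by nlinarith)
      have h5 : t * (t ^ (w.re - 1) * Real.exp (-(z.re * t)))
          ≤ t * (t ^ (w.re - 1) * Real.exp (-(ε * t))) := by
        apply mul_le_mul_of_nonneg_left _ ht.le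
        exact mul_le_mul_of_nonneg_left h4 (by positivity)
      refine h5.trans (le_of_eq ?_)
      rw [show w.re = (w.re - 1) + 1 by ring, Real.rpow_add_one ht.ne']
      ring
    have hbint : IntegrableOn (fun t : ℝ => t ^ w.re * Real.exp (-(ε * t))) (Ioi 0) :=
      integrableOn_rpow_mul_exp_neg (by linarith) hε0
    have hdiff : ∀ᵐ t : ℝ ∂(volume.restrict (Ioi (0:ℝ))), ∀ z ∈ ball z₀ ε,
        HasDerivAt (fun z : ℂ => (t : ℂ) ^ (w - 1) * Complex.exp (-z * t))
          ((t : ℂ) ^ (w - 1) * (-(t:ℂ) * Complex.exp (-z * t))) z := by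
      apply Eventually.of_forall
      intro t z _
      have h0 : HasDerivAt (fun z : ℂ => -z * (t:ℂ)) (-t) z := by
        simpa using (((hasDerivAt_id z).neg).mul_const (t:ℂ))
      have h1 := (h0.cexp).const_mul ((t:ℂ) ^ (w-1))
      exact h1.congr_deriv (by ring)
    have key := hasDerivAt_integral_of_dominated_loc_of_deriv_le (ball_mem_nhds z₀ hε0) hmeas hint hmeas'
      hbound hbint hdiff
    exact (key.2.differentiableAt).differentiableWithinAt
  have hhd : DifferentiableOn ℂ h U := by
    intro z₀ hz₀
    rw [hU, mem_setOf_eq] at hz₀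
    apply DifferentiableAt.differentiableWithinAt
    apply DifferentiableAt.const_mul
    exact DifferentiableAt.cpow differentiableAt_id (differentiableAt_const _) (Or.inl hz₀)
  have heq : EqOn g h U := by
    apply AnalyticOnNhd.eqOn_of_preconnected_of_frequently_eq
      (hgd.analyticOnNhd hUopen) (hhd.analyticOnNhd hUopen) hUconn
      (show (1:ℂ) ∈ U by simp [hU])
    have hreal : ∀ r : ℝ, 0 < r → g r = h r := by
      intro r hr
      rw [hg, hh]
      have hint := integral_cpow_mul_exp_neg_mul_Ioi (a := w) hw hr
      simp only []
      rw [show (fun t : ℝ => (t:ℂ) ^ (w-1) * Complex.exp (-(r:ℂ) * t))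
          = (fun t : ℝ => (t:ℂ) ^ (w-1) * Complex.exp (-((r:ℂ) * t))) by
        funext t; rw [neg_mul]]
      rw [hint, one_div, Complex.inv_cpow _ _ (by
          rw [Complex.arg_ofReal_of_nonneg hr.le]; exact Ne.symm (Real.pi_ne_zero)),
        ← Complex.cpow_neg, mul_comm]
    have htend : Tendsto (fun n : ℕ => ((1 + ((n:ℝ)+1)⁻¹ : ℝ) : ℂ)) atTop
        (nhdsWithin 1 {(1:ℂ)}ᶜ) := by
      apply tendsto_nhdsWithin_of_tendsto_nhds_of_eventually_within
      · have h1 : Tendsto (fun n : ℕ => (1 + ((n:ℝ)+1)⁻¹ : ℝ)) atTop (nhds 1) := by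
          simpa [one_div] using (tendsto_const_nhds : Tendsto (fun _ : ℕ => (1:ℝ)) atTop (nhds 1)).add tendsto_one_div_add_atTop_nhds_zero_nat
        have := (Complex.continuous_ofReal.tendsto 1).comp h1
        simpa [Function.comp_def] using this
      · apply Eventually.of_forall
        intro n
        simp only [mem_compl_iff, mem_singleton_iff]
        intro hcon
        have h2 : (1 + ((n:ℝ)+1)⁻¹ : ℝ) = 1 := by exact_mod_cast hcon
        have h3 : (0:ℝ) < ((n:ℝ)+1)⁻¹ := by positivity
        linarith
    apply htend.frequently
    apply Frequently.of_forall
    intro n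
    exact hreal _ (by positivity)
  exact heq (show z ∈ U from hz)

lemma gamma_ratio {ν : ℂ} (hν : -1 < ν.re) : ∀ k : ℕ,
    Real.Gamma (ν.re + k + 1) * ‖Complex.Gamma (ν + 1)‖
      ≤ Real.Gamma (ν.re + 1) * ‖Complex.Gamma (ν + k + 1)‖ := by
  intro k
  induction k with
  | zero => simp
  | succ k ih =>
    have hk0 : (0:ℝ) ≤ (k:ℝ) := Nat.cast_nonneg k
    have hpos : (0:ℝ) < ν.re + k + 1 := by linarith
    have hzc : (ν + k + 1) ≠ 0 := by
      intro h
      have := congrArg Complex.re h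
      simp only [Complex.add_re, Complex.natCast_re, Complex.one_re, Complex.zero_re] at this
      linarith
    have hΓ1 : (0:ℝ) ≤ Real.Gamma (ν.re + 1) := (Real.Gamma_pos_of_pos (by linarith)).le
    push_cast
    rw [show ν.re + ((k:ℝ) + 1) + 1 = (ν.re + (k:ℝ) + 1) + 1 by ring,
      Real.Gamma_add_one hpos.ne']
    rw [show ν + ((k:ℂ) + 1) + 1 = (ν + (k:ℂ) + 1) + 1 by ring, Complex.Gamma_add_one _ hzc,
      norm_mul]
    have habs : ν.re + (k:ℝ) + 1 ≤ ‖ν + k + 1‖ := by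
      calc ν.re + (k:ℝ) + 1 = (ν + k + 1).re := by simp
        _ ≤ |(ν + k + 1).re| := le_abs_self _
        _ ≤ ‖ν + k + 1‖ := Complex.abs_re_le_norm _
    calc (ν.re + (k:ℝ) + 1) * Real.Gamma (ν.re + k + 1) * ‖Complex.Gamma (ν+1)‖
        ≤ (ν.re + (k:ℝ) + 1) * (Real.Gamma (ν.re+1) * ‖Complex.Gamma (ν + k + 1)‖) := by
          rw [mul_assoc]
          exact mul_le_mul_of_nonneg_left ih hpos.le
      _ ≤ ‖ν + k + 1‖
            * (Real.Gamma (ν.re+1) * ‖Complex.Gamma (ν+k+1)‖) := by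
          apply mul_le_mul_of_nonneg_right habs (by positivity)
      _ = Real.Gamma (ν.re+1) * (‖ν+k+1‖ * ‖Complex.Gamma (ν+k+1)‖) := by
          ring

end LaplaceBesselAux

open LaplaceBesselAux

/-- The Bessel function of the first kind of order `ν`, defined by its power series. -/
noncomputable def besselJ (ν : ℂ) (z : ℂ) : ℂ :=
  ∑' k : ℕ, (-1) ^ k * (z / 2) ^ (ν + 2 * k) / ((k.factorial : ℂ) * Complex.Gamma (ν + k + 1))

open Set Filter Metric in
set_option maxHeartbeats 1000000 in
/-- `∫_0^∞ e^{-sx} x^{ν/2} J_ν(2√(ax)) dx = e^{-a/s} a^{ν/2} s^{-ν-1}`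
for `Re s > 0`, `Re ν > -1`, `a > 0`. -/
theorem laplace_besselJ (s ν : ℂ) (a : ℝ) (hs : 0 < s.re) (hν : -1 < ν.re) (ha : 0 < a) :
    ∫ x in Set.Ioi (0 : ℝ),
        Complex.exp (-s * x) * (x : ℂ) ^ (ν / 2) * besselJ ν (2 * Real.sqrt (a * x))
      = Complex.exp (-(a : ℂ) / s) * (a : ℂ) ^ (ν / 2) * s ^ (-ν - 1) := by
  have hsne : s ≠ 0 := fun h => by simp [h] at hs
  have hane : (a:ℂ) ≠ 0 := ofReal_ne_zero.mpr ha.ne'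
  set b := ν.re with hb
  set σ := s.re with hσ
  -- coefficients
  set C : ℕ → ℂ := fun k =>
    (-1) ^ k * (a:ℂ) ^ (ν/2 + k) / ((k.factorial : ℂ) * Complex.Gamma (ν + k + 1)) with hC
  set f : ℕ → ℝ → ℂ := fun k x => C k * ((x:ℂ) ^ (ν + k) * Complex.exp (-s * x)) with hf
  have hwre : ∀ k : ℕ, 0 < (ν + k + 1).re := by
    intro k; simp only [Complex.add_re, Complex.natCast_re, Complex.one_re]; push_cast; linarith
  have hΓne : ∀ k : ℕ, Complex.Gamma (ν + k + 1) ≠ 0 := fun k =>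
    Complex.Gamma_ne_zero_of_re_pos (hwre k)
  have hsub : ∀ k : ℕ, ν + k = (ν + k + 1) - 1 := fun k => by ring
  -- norm of C
  have hnormC : ∀ k : ℕ, ‖C k‖
      = a ^ (b/2 + k) / ((k.factorial : ℝ) * ‖Complex.Gamma (ν + k + 1)‖) := by
    intro k
    rw [hC]
    simp only [norm_div, norm_mul, norm_pow, norm_neg, norm_one, one_pow, one_mul,
      Complex.norm_natCast]
    congr 1
    rw [Complex.norm_cpow_eq_rpow_re_of_pos ha]
    congr 1
    simp only [Complex.add_re, Complex.natCast_re]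
    congr 1
    rw [show (2:ℂ) = ((2:ℝ):ℂ) by norm_num, Complex.div_ofReal_re]
  -- integrability of each f k
  have hint : ∀ k : ℕ, IntegrableOn (f k) (Ioi 0) := by
    intro k
    rw [hf]
    simp only []
    apply Integrable.const_mul
    rw [show (fun x : ℝ => (x:ℂ) ^ (ν + k) * Complex.exp (-s * x))
        = (fun x : ℝ => (x:ℂ) ^ ((ν + k + 1) - 1) * Complex.exp (-s * x)) by
      funext x; rw [← hsub]]
    exact integrableOn_cpow_mul_exp_neg (hwre k) hs s le_rfl
  -- value of each integral
  have hval : ∀ k : ℕ, ∫ x in Ioi (0:ℝ), f k x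
      = C k * (Complex.Gamma (ν + k + 1) * s ^ (-(ν + k + 1))) := by
    intro k
    rw [hf]
    simp only []
    rw [integral_const_mul]
    congr 1
    rw [show (fun x : ℝ => (x:ℂ) ^ (ν + k) * Complex.exp (-s * x))
        = (fun x : ℝ => (x:ℂ) ^ ((ν + k + 1) - 1) * Complex.exp (-s * x)) by
      funext x; rw [← hsub]]
    exact laplace_cpow (hwre k) hs
  -- norm integral of each f k
  have hnormint : ∀ k : ℕ, ∫ x in Ioi (0:ℝ), ‖f k x‖
      = ‖C k‖ * ((1/σ) ^ (b + k + 1) * Real.Gamma (b + k + 1)) := by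
    intro k
    rw [show (∫ x in Ioi (0:ℝ), ‖f k x‖)
        = ∫ x in Ioi (0:ℝ), ‖C k‖ * (x ^ (b + k) * Real.exp (-(σ * x))) from ?_]
    · rw [integral_const_mul]
      congr 1
      have := Real.integral_rpow_mul_exp_neg_mul_Ioi (a := b + k + 1) (r := σ)
        (by have := Nat.cast_nonneg (α := ℝ) k; linarith) hs
      rw [← this]
      congr 1
      funext x
      norm_num
    · apply setIntegral_congr_fun measurableSet_Ioi
      intro x hx
      rw [mem_Ioi] at hx
      rw [hf]
      simp only []
      rw [norm_mul, hsub k, norm_cpow_exp hx]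
      have : (ν + (k:ℂ) + 1).re - 1 = b + k := by
        simp only [Complex.add_re, Complex.natCast_re, Complex.one_re]
        ring
      rw [this]
  -- summability of norms
  have hsummable : Summable (fun k : ℕ => ∫ x in Ioi (0:ℝ), ‖f k x‖) := by
    set D : ℝ := a ^ (b/2) * ((1/σ) ^ (b+1) * Real.Gamma (b+1)) / ‖Complex.Gamma (ν+1)‖
    have hle : ∀ k : ℕ, (∫ x in Ioi (0:ℝ), ‖f k x‖) ≤ D * ((a/σ) ^ k / k.factorial) := ?_
    · exact Summable.of_nonneg_of_le (fun k => integral_nonneg fun x => norm_nonneg _) hle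
        ((Real.summable_pow_div_factorial (a/σ)).mul_left D)
    intro k
    rw [hnormint k, hnormC k]
    have hΓR : (0:ℝ) < Real.Gamma (b + k + 1) :=
      Real.Gamma_pos_of_pos (by have := Nat.cast_nonneg (α := ℝ) k; linarith)
    have hΓC : (0:ℝ) < ‖Complex.Gamma (ν + k + 1)‖ :=
      norm_pos_iff.mpr (hΓne k)
    have hΓC1 : (0:ℝ) < ‖Complex.Gamma (ν + 1)‖ := by
      have := hΓne 0; push_cast at this
      exact norm_pos_iff.mpr (by simpa using this)
    have hΓR1 : (0:ℝ) < Real.Gamma (b + 1) := Real.Gamma_pos_of_pos (by linarith)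
    have hratio := gamma_ratio hν k
    have hfact : (0:ℝ) < (k.factorial : ℝ) := by positivity
    have hrw1 : a ^ (b/2 + (k:ℝ)) = a ^ (b/2) * a ^ k := by
      rw [Real.rpow_add ha, Real.rpow_natCast]
    have hrw2 : (1/σ) ^ (b + (k:ℝ) + 1) = (1/σ) ^ (b+1) * (1/σ) ^ k := by
      rw [show b + (k:ℝ) + 1 = (b+1) + k by ring, Real.rpow_add (by positivity),
        Real.rpow_natCast]
    calc a ^ (b/2 + (k:ℝ)) / ((k.factorial : ℝ) * ‖Complex.Gamma (ν + k + 1)‖)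
          * ((1/σ) ^ (b + (k:ℝ) + 1) * Real.Gamma (b + (k:ℝ) + 1))
        = (a ^ (b/2) * (1/σ)^(b+1) * (a/σ)^k / (k.factorial : ℝ))
            * (Real.Gamma (b + k + 1) / ‖Complex.Gamma (ν + k + 1)‖) := by
          rw [hrw1, hrw2, div_pow]
          have hσ0 : σ ≠ 0 := hs.ne'
          field_simp
          rw [one_pow, mul_one, ← mul_pow]
          congr 1
          field_simp
      _ ≤ (a ^ (b/2) * (1/σ)^(b+1) * (a/σ)^k / (k.factorial : ℝ))
            * (Real.Gamma (b + 1) / ‖Complex.Gamma (ν + 1)‖) := by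
          apply mul_le_mul_of_nonneg_left _ (by positivity)
          rw [div_le_div_iff₀ hΓC hΓC1]
          linarith [hratio]
      _ = D * ((a/σ) ^ k / k.factorial) := by
          simp only [D]
          field_simp
  -- pointwise identity
  have hpt : ∀ x ∈ Ioi (0:ℝ),
      Complex.exp (-s * x) * (x : ℂ) ^ (ν / 2) * besselJ ν (2 * Real.sqrt (a * x))
        = ∑' k, f k x := by
    intro x hx
    rw [mem_Ioi] at hx
    have hax : 0 < a * x := by positivity
    have hxne : (x:ℂ) ≠ 0 := ofReal_ne_zero.mpr hx.ne'
    have hS : ∀ k : ℕ, ((Real.sqrt (a*x) : ℝ) : ℂ) ^ (ν + 2*(k:ℂ))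
        = (a:ℂ) ^ (ν/2 + k) * (x:ℂ) ^ (ν/2 + k) := by
      intro k
      have hlog : Complex.log ((((a*x):ℝ)) : ℂ) = ((Real.log (a*x) : ℝ) : ℂ) :=
        (Complex.ofReal_log hax.le).symm
      rw [Real.sqrt_eq_rpow, Complex.ofReal_cpow hax.le,
        show (((1/(2:ℝ)) : ℝ) : ℂ) = (1/2 : ℂ) by norm_num,
        ← Complex.cpow_mul (ν + 2*(k:ℂ))
          (by rw [hlog]; simp only [Complex.mul_im, Complex.ofReal_im, Complex.ofReal_re]
              norm_num
              exact Real.pi_pos)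
          (by rw [hlog]; simp only [Complex.mul_im, Complex.ofReal_im, Complex.ofReal_re]
              norm_num
              exact Real.pi_nonneg),
        show (1/2 : ℂ) * (ν + 2*(k:ℂ)) = ν/2 + k by ring,
        Complex.ofReal_mul, Complex.mul_cpow_ofReal_nonneg ha.le hx.le]
    have hterm2 : ∀ k : ℕ,
        Complex.exp (-s*x) * (x:ℂ)^(ν/2) *
          ((-1)^k * ((2 * ((Real.sqrt (a*x) : ℝ) : ℂ) / 2) ^ (ν + 2*(k:ℂ)))
            / ((k.factorial : ℂ) * Complex.Gamma (ν + k + 1)))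
          = f k x := by
      intro k
      have h2 : (2 * ((Real.sqrt (a*x) : ℝ) : ℂ) / 2) = ((Real.sqrt (a*x) : ℝ) : ℂ) := by ring
      rw [h2, hS k, hf, hC]
      simp only []
      have hxx : (x:ℂ)^(ν/2) * (x:ℂ)^(ν/2 + (k:ℂ)) = (x:ℂ)^(ν + k) := by
        rw [← Complex.cpow_add _ _ hxne]
        congr 1
        ring
      rw [← hxx]
      have hkf : ((k.factorial : ℂ)) ≠ 0 := Nat.cast_ne_zero.mpr k.factorial_ne_zero
      field_simp [hΓne k]
    rw [besselJ, ← tsum_mul_left]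
    exact tsum_congr hterm2
  -- conclusion
  have hHasSum := hasSum_integral_of_summable_integral_norm
    (μ := volume.restrict (Ioi (0:ℝ))) (F := f) hint hsummable
  rw [setIntegral_congr_fun measurableSet_Ioi hpt, ← hHasSum.tsum_eq]
  have hterm : ∀ k : ℕ, (∫ x in Ioi (0:ℝ), f k x)
      = (a:ℂ) ^ (ν/2) * s ^ (-ν - 1) * ((-(a:ℂ)/s) ^ k / (k.factorial : ℂ)) := by
    intro k
    rw [hval k, hC]
    simp only []
    have h1 : (a:ℂ) ^ (ν/2 + (k:ℂ)) = (a:ℂ) ^ (ν/2) * (a:ℂ) ^ k := by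
      rw [Complex.cpow_add _ _ hane, Complex.cpow_natCast]
    have h2 : s ^ (-(ν + k + 1)) = s ^ (-ν - 1) * (s ^ k)⁻¹ := by
      rw [show -(ν + k + 1) = (-ν - 1) + (-(k:ℂ)) by ring, Complex.cpow_add _ _ hsne,
        Complex.cpow_neg, Complex.cpow_natCast]
    have hkf : ((k.factorial : ℂ)) ≠ 0 := Nat.cast_ne_zero.mpr k.factorial_ne_zero
    have hsk : (s:ℂ) ^ k ≠ 0 := pow_ne_zero _ hsne
    have h3 : (-(a:ℂ)/s)^k = (-1)^k * (a:ℂ)^k / s^k := by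
      rw [div_pow, neg_pow]
    rw [h1, h2, h3]
    field_simp [hΓne k]
  rw [tsum_congr hterm, tsum_mul_left]
  rw [show Complex.exp (-(a:ℂ)/s) = ∑' k : ℕ, (-(a:ℂ)/s) ^ k / (k.factorial : ℂ) from ?_]
  · ring
  · rw [Complex.exp_eq_exp_ℂ, NormedSpace.exp_eq_tsum_div]
end

section
/- For Re(s) > 0, the Laplace transform of the circle-problem error term satisfies ∫_0^∞ e^{-sx} P(x) dx = π s^{-2} ∑_{n=1}^∞ r(n) e^{-π² n / s} (for real s > 0), where P(x) = ∑'_{n≤x} r(n) - πx + 1 and r(n) is the number of representations of n as a sum of two integer squares. -/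
open Real MeasureTheory

open Set
open scoped ENNReal NNReal

/-- `r(n)`: the number of representations of `n` as an ordered sum of two integer squares. -/
noncomputable def sumTwoSquares (n : ℕ) : ℕ :=
  Nat.card {p : ℤ × ℤ // p.1 ^ 2 + p.2 ^ 2 = (n : ℤ)}

/-- The error term in the Gauss circle problem. -/
noncomputable def circleError (x : ℝ) : ℝ :=
  (∑ n ∈ Finset.Icc 1 ⌊x⌋₊, (sumTwoSquares n : ℝ)) - π * x + 1


private lemma exp_int_Ioi {s : ℝ} (hs : 0 < s) (a : ℝ) :
    ∫ x in Set.Ioi a, Real.exp (-s * x) = Real.exp (-s * a) / s := by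
  have h := integral_comp_mul_left_Ioi (fun x => Real.exp (-x)) a hs
  simp only [smul_eq_mul] at h
  simp only [show ∀ x : ℝ, -s * x = -(s * x) by intro x; ring]
  rw [h, integral_exp_neg_Ioi, inv_mul_eq_div]

private lemma x_exp_integral {s : ℝ} (hs : 0 < s) :
    ∫ x in Set.Ioi (0:ℝ), x * Real.exp (-s * x) = 1 / s ^ 2 := by
  have h := integral_rpow_mul_exp_neg_mul_Ioi (by norm_num : (0:ℝ) < 2) hs
  have h2 : Real.Gamma 2 = 1 := by
    rw [show (2:ℝ) = (1:ℕ) + 1 by norm_num, Real.Gamma_nat_eq_factorial]; norm_num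
  rw [h2, mul_one] at h
  rw [show ((2:ℝ)) = ((2:ℕ):ℝ) from by norm_num, Real.rpow_natCast] at h
  rw [show (1:ℝ)/s^2 = (1/s)^(2:ℕ) from by rw [div_pow, one_pow], ← h]
  refine setIntegral_congr_fun measurableSet_Ioi (fun x hx => ?_)
  rw [show ((2:ℕ):ℝ) - 1 = 1 by norm_num, Real.rpow_one]
  ring_nf

private lemma integrable_x_exp {s : ℝ} (hs : 0 < s) :
    IntegrableOn (fun x => x * Real.exp (-s * x)) (Set.Ioi (0:ℝ)) := by
  have hg : IntegrableOn (fun x : ℝ => (2/s) * Real.exp (-(s/2) * x)) (Set.Ioi (0:ℝ)) :=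
    (exp_neg_integrableOn_Ioi 0 (by positivity)).const_mul _
  refine hg.mono' ?_ ?_
  · exact (continuous_id.mul (Real.continuous_exp.comp (by continuity))).aestronglyMeasurable
  · rw [ae_restrict_iff' measurableSet_Ioi]
    filter_upwards with x hx
    have hx0 : (0:ℝ) < x := hx
    have h1 : s/2 * x ≤ Real.exp (s/2 * x) := by
      have := Real.add_one_le_exp (s/2 * x); linarith
    have h2 : x ≤ 2/s * Real.exp (s/2 * x) := by
      rw [div_mul_eq_mul_div, le_div_iff₀ hs]; nlinarith
    have h3 : ‖x * Real.exp (-s * x)‖ = x * Real.exp (-s * x) := by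
      rw [Real.norm_eq_abs, abs_of_nonneg]; positivity
    rw [h3]
    calc x * Real.exp (-s * x) ≤ (2/s * Real.exp (s/2*x)) * Real.exp (-s*x) := by
          exact mul_le_mul_of_nonneg_right h2 (Real.exp_pos _).le
      _ = 2/s * Real.exp (-(s/2) * x) := by rw [mul_assoc, ← Real.exp_add]; ring_nf

private lemma summable_theta {c : ℝ} (hc : 0 < c) :
    Summable (fun k : ℤ => Real.exp (-c * (k:ℝ)^2)) := by
  have hgeo : Summable (fun n : ℕ => Real.exp (-c) ^ n) :=
    summable_geometric_of_lt_one (Real.exp_pos _).le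
      (Real.exp_lt_one_iff.mpr (by linarith))
  have key : ∀ g : ℕ → ℤ, (∀ n, (g n : ℝ)^2 = (n:ℝ)^2) →
      Summable (fun n : ℕ => Real.exp (-c * ((g n : ℤ) : ℝ)^2)) := by
    intro g hg
    refine Summable.of_nonneg_of_le (fun n => (Real.exp_pos _).le) (fun n => ?_) hgeo
    rw [← Real.exp_nat_mul, hg n]
    apply Real.exp_le_exp.mpr
    have h1 : (n:ℝ) ≤ (n:ℝ)^2 := by
      rcases Nat.eq_zero_or_pos n with h | h
      · simp [h]
      · have : (1:ℝ) ≤ (n:ℝ) := by exact_mod_cast h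
        nlinarith
    nlinarith
  refine Summable.of_nat_of_neg (key (fun n => (n:ℤ)) (by intro n; norm_num)) ?_
  exact key (fun n => -(n:ℤ)) (by intro n; push_cast; ring)

private lemma sumTwoSquares_zero : sumTwoSquares 0 = 1 := by
  rw [sumTwoSquares, Nat.card_eq_one_iff_unique]
  constructor
  · constructor
    rintro ⟨⟨a, b⟩, h⟩ ⟨⟨a', b'⟩, h'⟩
    have hz : ∀ u v : ℤ, u^2 + v^2 = ((0:ℕ):ℤ) → u = 0 ∧ v = 0 := by
      intro u v huv
      push_cast at huv
      constructor <;> nlinarith [sq_nonneg u, sq_nonneg v]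
    obtain ⟨h1, h2⟩ := hz a b h
    obtain ⟨h3, h4⟩ := hz a' b' h'
    subst h1; subst h2; subst h3; subst h4; rfl
  · exact ⟨⟨(0, 0), by norm_num⟩⟩

private lemma hasSum_r {c : ℝ} (hc : 0 < c) :
    HasSum (fun n : ℕ => (sumTwoSquares n : ℝ) * Real.exp (-c * n))
      ((∑' k : ℤ, Real.exp (-c * (k:ℝ)^2)) ^ 2) := by
  set T := ∑' k : ℤ, Real.exp (-c * (k:ℝ)^2) with hT
  have hθ := summable_theta hc
  have hf0 : Summable (fun p : ℤ × ℤ =>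
      Real.exp (-c * (p.1:ℝ)^2) * Real.exp (-c * (p.2:ℝ)^2)) :=
    hθ.mul_of_nonneg hθ (fun _ => (Real.exp_pos _).le) (fun _ => (Real.exp_pos _).le)
  have hval : ∀ p : ℤ × ℤ, Real.exp (-c * (p.1:ℝ)^2) * Real.exp (-c * (p.2:ℝ)^2)
      = Real.exp (-c * ((p.1:ℝ)^2 + (p.2:ℝ)^2)) := by
    intro p; rw [← Real.exp_add]; ring_nf
  have hf : Summable (fun p : ℤ × ℤ => Real.exp (-c * ((p.1:ℝ)^2 + (p.2:ℝ)^2))) :=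
    hf0.congr hval
  have htsum : ∑' p : ℤ × ℤ, Real.exp (-c * ((p.1:ℝ)^2 + (p.2:ℝ)^2)) = T ^ 2 := by
    rw [← tsum_congr hval, hf0.tsum_prod]
    simp_rw [tsum_mul_left, tsum_mul_right, ← hT]
    ring
  have hF : HasSum (fun p : ℤ × ℤ => Real.exp (-c * ((p.1:ℝ)^2 + (p.2:ℝ)^2))) (T ^ 2) :=
    htsum ▸ hf.hasSum
  have hfib := hF.tsum_fiberwise (fun p : ℤ × ℤ => (p.1^2 + p.2^2).toNat)
  have heq : (fun n : ℕ =>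
      ∑' p : (fun p : ℤ × ℤ => (p.1^2 + p.2^2).toNat) ⁻¹' {n},
        Real.exp (-c * (((p:ℤ×ℤ).1:ℝ)^2 + ((p:ℤ×ℤ).2:ℝ)^2)))
      = fun n : ℕ => (sumTwoSquares n : ℝ) * Real.exp (-c * n) := by
    funext n
    have hmem : ∀ p : ℤ × ℤ, p ∈ (fun p : ℤ × ℤ => (p.1^2 + p.2^2).toNat) ⁻¹' {n}
        ↔ p.1^2 + p.2^2 = (n : ℤ) := by
      intro p
      simp only [Set.mem_preimage, Set.mem_singleton_iff]
      have h0 : (0:ℤ) ≤ p.1^2 + p.2^2 := by positivity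
      generalize p.1^2 + p.2^2 = a at *
      omega
    have hconst : ∀ p : (fun p : ℤ × ℤ => (p.1^2 + p.2^2).toNat) ⁻¹' {n},
        Real.exp (-c * (((p:ℤ×ℤ).1:ℝ)^2 + ((p:ℤ×ℤ).2:ℝ)^2)) = Real.exp (-c * n) := by
      rintro ⟨p, hp⟩
      have := (hmem p).mp hp
      congr 1
      have : ((p.1:ℝ)^2 + (p.2:ℝ)^2) = (n:ℝ) := by exact_mod_cast congrArg (Int.cast : ℤ → ℝ) this
      rw [this]
    rw [tsum_congr hconst, tsum_const, nsmul_eq_mul]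
    congr 2
    rw [sumTwoSquares]
    exact Nat.card_congr (Equiv.subtypeEquivRight hmem)
  rwa [heq] at hfib

private lemma theta_sq {s : ℝ} (hs : 0 < s) :
    (∑' k : ℤ, Real.exp (-s * (k:ℝ)^2)) ^ 2
      = π / s * (∑' k : ℤ, Real.exp (-(π^2/s) * (k:ℝ)^2)) ^ 2 := by
  have hπ := Real.pi_pos
  have h := Real.tsum_exp_neg_mul_int_sq (a := s/π) (by positivity)
  have e1 : -π * (s/π) = -s := by field_simp
  have e2 : -π / (s/π) = -(π^2/s) := by rw [div_div_eq_mul_div, neg_mul, neg_div, neg_inj]; ring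
  rw [e1, e2] at h
  rw [h, mul_pow, ← Real.sqrt_eq_rpow]
  rw [div_pow, one_pow, Real.sq_sqrt (by positivity)]
  congr 1
  rw [one_div_div]

/-- The Laplace transform of the circle-problem error term:
`∫_0^∞ e^{-sx} P(x) dx = π s^{-2} ∑_{n≥1} r(n) e^{-π²n/s}` for real `s > 0`. -/
theorem laplace_circleError (s : ℝ) (hs : 0 < s) :
    ∫ x in Set.Ioi (0 : ℝ), Real.exp (-s * x) * circleError x
      = π / s ^ 2 * ∑' n : ℕ+, (sumTwoSquares n : ℝ) * Real.exp (-π ^ 2 * n / s) := by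
  have hπ := Real.pi_pos
  have hc2 : 0 < π ^ 2 / s := by positivity
  set w : ℕ → ℝ := fun n => (sumTwoSquares n : ℝ) * Real.exp (-s * n) with hw
  set u : ℕ → ℝ := fun n => (sumTwoSquares n : ℝ) * Real.exp (-(π ^ 2 / s) * n) with hu
  set a := (∑' k : ℤ, Real.exp (-s * (k:ℝ)^2)) ^ 2 with ha
  set b := (∑' k : ℤ, Real.exp (-(π^2/s) * (k:ℝ)^2)) ^ 2 with hb
  have hA : HasSum w a := hasSum_r hs
  have hB : HasSum u b := hasSum_r hc2
  have hab : a = π / s * b := theta_sq hs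
  have hw0 : w 0 = 1 := by simp [hw, sumTwoSquares_zero]
  have hu0 : u 0 = 1 := by simp [hu, sumTwoSquares_zero]
  -- the right-hand side sum
  have hRHS : ∑' n : ℕ+, (sumTwoSquares (n:ℕ) : ℝ) * Real.exp (-π ^ 2 * ((n:ℕ):ℝ) / s)
      = b - 1 := by
    have h1 : HasSum (fun n : ℕ => u (n + 1)) (b - 1) := by
      have h := (hasSum_nat_add_iff' (f := u) 1).mpr hB
      simpa [hu0] using h
    have h2 : HasSum ((fun n : ℕ+ =>
        (sumTwoSquares (n:ℕ) : ℝ) * Real.exp (-π ^ 2 * ((n:ℕ):ℝ) / s))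
          ∘ Equiv.pnatEquivNat.symm) (b - 1) := by
      have hfun : ((fun n : ℕ+ =>
          (sumTwoSquares (n:ℕ) : ℝ) * Real.exp (-π ^ 2 * ((n:ℕ):ℝ) / s))
            ∘ Equiv.pnatEquivNat.symm) = fun n : ℕ => u (n + 1) := by
        funext n
        simp only [Function.comp_apply, Equiv.pnatEquivNat_symm_apply, Nat.succPNat_coe, hu]
        congr 1
        push_cast
        ring
      rw [hfun]
      exact h1
    exact ((Equiv.pnatEquivNat.symm.hasSum_iff).mp h2).tsum_eq
  -- the summand family for the integral
  set f : ℕ → ℝ → ℝ := fun n x =>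
    if n = 0 then 0
    else Set.indicator (Set.Ici (n:ℝ)) (fun y => (sumTwoSquares n : ℝ) * Real.exp (-s * y)) x
    with hf
  set μ := volume.restrict (Set.Ioi (0:ℝ)) with hμ
  have hnn : ∀ n x, 0 ≤ f n x := by
    intro n x
    by_cases h : n = 0
    · simp [hf, h]
    · simp only [hf, h, if_false]
      apply Set.indicator_nonneg
      intro y _
      positivity
  have hfmeas : ∀ n, StronglyMeasurable (f n) := by
    intro n
    by_cases h : n = 0
    · simpa [hf, h] using stronglyMeasurable_const
    · simp only [hf, h, if_false]
      exact (Continuous.stronglyMeasurable (by continuity)).indicator measurableSet_Ici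
  have hIexp : IntegrableOn (fun x => Real.exp (-s * x)) (Set.Ioi (0:ℝ)) := by
    have := exp_neg_integrableOn_Ioi 0 hs
    simpa using this
  have hfint : ∀ n, Integrable (f n) μ := by
    intro n
    by_cases h : n = 0
    · simpa [hf, h] using integrable_zero _ _ μ
    · simp only [hf, h, if_false]
      exact (hIexp.const_mul _).indicator measurableSet_Ici
  set v : ℕ → ℝ := fun n =>
    if n = 0 then 0 else (sumTwoSquares n : ℝ) * Real.exp (-s * n) / s with hv
  have hval : ∀ n, ∫ x, f n x ∂μ = v n := by
    intro n
    by_cases h : n = 0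
    · simp [hf, hv, h]
    · simp only [hf, hv, h, if_false]
      rw [hμ, integral_indicator measurableSet_Ici,
        Measure.restrict_restrict measurableSet_Ici]
      have h1 : (1:ℝ) ≤ (n:ℝ) := by exact_mod_cast Nat.one_le_iff_ne_zero.mpr h
      have hsub : Set.Ici ((n:ℝ)) ∩ Set.Ioi 0 = Set.Ici (n:ℝ) :=
        Set.inter_eq_self_of_subset_left (fun x hx => lt_of_lt_of_le (by linarith : (0:ℝ) < n) (Set.mem_Ici.mp hx))
      rw [hsub, integral_Ici_eq_integral_Ioi, MeasureTheory.integral_const_mul, exp_int_Ioi hs]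
      ring
  have hwnn : ∀ n, 0 ≤ w n := fun n =>
    mul_nonneg (Nat.cast_nonneg _) (Real.exp_pos _).le
  have hvle : ∀ n, v n ≤ w n / s := by
    intro n
    by_cases h : n = 0
    · simp only [hv, h, if_true]
      exact div_nonneg (hwnn 0) hs.le
    · simp [hv, hw, h]
  have hofReal : ∀ n, ∫⁻ x, ENNReal.ofReal (f n x) ∂μ = ENNReal.ofReal (v n) := by
    intro n
    rw [← ofReal_integral_eq_lintegral_ofReal (hfint n)
      (Filter.Eventually.of_forall (hnn n)), hval n]
  have hvnn : ∀ n, 0 ≤ v n := by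
    intro n
    by_cases h : n = 0 <;> simp [hv, h]
    positivity
  have hkey : ∑' n, ∫⁻ x, ENNReal.ofReal (f n x) ∂μ ≠ ⊤ := by
    have e1 : ∑' n, ∫⁻ x, ENNReal.ofReal (f n x) ∂μ = ∑' n, ENNReal.ofReal (v n) :=
      tsum_congr hofReal
    have hle : ∑' n, ENNReal.ofReal (v n) ≤ ∑' n, ENNReal.ofReal (w n / s) :=
      ENNReal.tsum_le_tsum (fun n => ENNReal.ofReal_le_ofReal (hvle n))
    have e2 : ∑' n, ENNReal.ofReal (w n / s) = ENNReal.ofReal (∑' n, w n / s) :=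
      (ENNReal.ofReal_tsum_of_nonneg (fun n => div_nonneg (hwnn n) hs.le)
        (hA.summable.div_const s)).symm
    rw [e1]
    exact ne_top_of_le_ne_top (by rw [e2]; exact ENNReal.ofReal_ne_top) hle
  -- pointwise identity on `Ioi 0`
  have hzero : ∀ x ∈ Set.Ioi (0:ℝ), ∀ n ∉ Finset.Icc 1 ⌊x⌋₊, f n x = 0 := by
    intro x hx n hn
    by_cases h : n = 0
    · simp [hf, h]
    · have h3 : ⌊x⌋₊ < n := by
        rw [Finset.mem_Icc, not_and_or] at hn
        rcases hn with h1 | h2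
        · omega
        · omega
      have h4 : x < n := (Nat.floor_lt (le_of_lt hx)).mp h3
      simp only [hf, h, if_false]
      exact Set.indicator_of_notMem (by simpa [Set.mem_Ici] using not_le.mpr h4) _
  have hsummf : ∀ x ∈ Set.Ioi (0:ℝ), Summable (fun n => f n x) := fun x hx =>
    summable_of_ne_finset_zero (hzero x hx)
  have hpt : ∀ x ∈ Set.Ioi (0:ℝ), ∑' n, f n x
      = Real.exp (-s * x) * ∑ n ∈ Finset.Icc 1 ⌊x⌋₊, (sumTwoSquares n : ℝ) := by
    intro x hx
    rw [tsum_eq_sum (hzero x hx), Finset.mul_sum]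
    apply Finset.sum_congr rfl
    intro n hn
    rw [Finset.mem_Icc] at hn
    have h1 : n ≠ 0 := by omega
    have h2 : (n:ℝ) ≤ x := by
      refine le_trans ?_ (Nat.floor_le (le_of_lt hx))
      exact_mod_cast hn.2
    simp only [hf, h1, if_false]
    rw [Set.indicator_of_mem (Set.mem_Ici.mpr h2)]
    ring
  -- the partial-sum function
  set G : ℝ → ℝ := fun x =>
    Real.exp (-s*x) * ∑ n ∈ Finset.Icc 1 ⌊x⌋₊, (sumTwoSquares n : ℝ) with hG
  have hGmeas : Measurable G := by
    apply Measurable.mul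
    · exact Real.measurable_exp.comp (measurable_id.const_mul (-s))
    · exact (measurable_from_nat
        (f := fun k : ℕ => ∑ n ∈ Finset.Icc 1 k, (sumTwoSquares n : ℝ))).comp
        Nat.measurable_floor
  have hGfin : HasFiniteIntegral G μ := by
    have heq : ∫⁻ x, ‖G x‖ₑ ∂μ = ∫⁻ x, ∑' n, ENNReal.ofReal (f n x) ∂μ := by
      apply lintegral_congr_ae
      rw [hμ, Filter.EventuallyEq, ae_restrict_iff' measurableSet_Ioi]
      filter_upwards with x hx
      have h1 : 0 ≤ G x := by
        rw [hG]
        positivity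
      rw [Real.enorm_eq_ofReal h1]
      have h2 : G x = ∑' n, f n x := (hpt x hx).symm
      rw [h2, ENNReal.ofReal_tsum_of_nonneg (fun n => hnn n x) (hsummf x hx)]
    show ∫⁻ x, ‖G x‖ₑ ∂μ < ⊤
    rw [heq, lintegral_tsum
      (fun n => ((hfmeas n).measurable.ennreal_ofReal).aemeasurable)]
    exact lt_top_iff_ne_top.mpr hkey
  have hGint : Integrable G μ := ⟨hGmeas.aestronglyMeasurable, hGfin⟩
  -- value of ∫ G
  have hsv : ∑' n, v n = (a - 1) / s := by
    have h1 : HasSum (fun n : ℕ => w (n + 1)) (a - 1) := by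
      have h := (hasSum_nat_add_iff' (f := w) 1).mpr hA
      simpa [hw0] using h
    have h2 : HasSum (fun n : ℕ => v (n + 1)) ((a - 1) / s) := by
      have h3 := h1.div_const s
      have hfun : (fun n : ℕ => v (n + 1)) = fun n : ℕ => w (n + 1) / s := by
        funext n
        simp [hv, hw]
      rw [hfun]
      exact h3
    have hsum : Summable v := (summable_nat_add_iff 1).mp h2.summable
    rw [hsum.tsum_eq_zero_add, h2.tsum_eq]
    simp [hv]
  have hGval : ∫ x, G x ∂μ = (a - 1) / s := by
    have e1 : ∫ x, G x ∂μ = ∫ x, (∑' n, f n x) ∂μ := by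
      rw [hμ]
      exact setIntegral_congr_fun measurableSet_Ioi (fun x hx => (hpt x hx).symm)
    rw [e1, integral_tsum (fun n => (hfmeas n).aestronglyMeasurable) ?_, ← hsv]
    · exact tsum_congr hval
    · have : ∀ n x, ‖f n x‖ₑ = ENNReal.ofReal (f n x) := fun n x =>
        Real.enorm_eq_ofReal (hnn n x)
      simp_rw [this]
      exact hkey
  -- the linear part
  have hF2int : Integrable (fun x => Real.exp (-s*x) - π * (x * Real.exp (-s*x))) μ :=
    hIexp.sub ((integrable_x_exp hs).const_mul π)
  have hF2val : ∫ x, (Real.exp (-s*x) - π * (x * Real.exp (-s*x))) ∂μ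
      = 1/s - π * (1/s^2) := by
    rw [integral_sub hIexp ((integrable_x_exp hs).const_mul π), MeasureTheory.integral_const_mul,
      x_exp_integral hs, exp_int_Ioi hs]
    norm_num
  calc ∫ x in Set.Ioi (0 : ℝ), Real.exp (-s * x) * circleError x
      = ∫ x, (G x + (Real.exp (-s*x) - π * (x * Real.exp (-s*x)))) ∂μ := by
        rw [hμ]
        refine integral_congr_ae (Filter.Eventually.of_forall (fun x => ?_))
        show Real.exp (-s*x) * circleError x
          = G x + (Real.exp (-s*x) - π * (x * Real.exp (-s*x)))
        have hce : circleError x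
            = (∑ n ∈ Finset.Icc 1 ⌊x⌋₊, (sumTwoSquares n : ℝ)) - π * x + 1 := rfl
        have hGx : G x
            = Real.exp (-s*x) * ∑ n ∈ Finset.Icc 1 ⌊x⌋₊, (sumTwoSquares n : ℝ) := rfl
        rw [hce, hGx]
        ring
    _ = (∫ x, G x ∂μ) + ∫ x, (Real.exp (-s*x) - π * (x * Real.exp (-s*x))) ∂μ :=
        integral_add hGint hF2int
    _ = (a - 1) / s + (1/s - π * (1/s^2)) := by rw [hGval, hF2val]
    _ = π / s ^ 2 * (b - 1) := by
        rw [hab]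
        field_simp
        ring
    _ = π / s ^ 2 * ∑' n : ℕ+, (sumTwoSquares (n:ℕ) : ℝ)
          * Real.exp (-π ^ 2 * ((n:ℕ):ℝ) / s) := by rw [hRHS]
end
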